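/- arXiv:2603.09153 — 3 statements merged into one kernel-verified Lean document; each statement's English description precedes it below -/
import Mathlib

section
/- Let G be a finite digraph and a, b vertices of G. Set A := N⁺(a) \ {b}, B := N⁻(b) \ {a}, let H := Ind(A \ B, B \ A), and let t be the number of connected components of H regarded as an undirected graph. Let Ω₃⁰ be the set of all ω ∈ Ω₃^{(a,b)}(G) such that no elementary 3-path occurring in ω with nonzero coefficient is a terminal element. Then Ω₃⁰ is a K-subspace of Ω₃^{(a,b)}(G) of dimension |E(H)| − |V(H)| + t. -/
open scoped BigOperators
open Classical

/-- A digraph: an irreflexive relation on a vertex type. -/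
structure Dgraph (V : Type*) where
  Adj : V → V → Prop
  loopless : ∀ v : V, ¬ Adj v v

/-- An elementary `p`-path on the vertex type `V`: a sequence of `p+1` vertices. -/
abbrev EPath (V : Type*) (p : ℕ) := Fin (p + 1) → V

/-- A path is regular if consecutive vertices are distinct. -/
def IsRegularPath {V : Type*} {p : ℕ} (f : EPath V p) : Prop :=
  ∀ k : Fin p, f k.castSucc ≠ f k.succ

/-- A path is allowed if consecutive vertices are joined by an arrow. -/
def IsAllowedPath {V : Type*} (G : Dgraph V) {p : ℕ} (f : EPath V p) : Prop :=
  ∀ k : Fin p, G.Adj (f k.castSucc) (f k.succ)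

/-- The projection of `Λ_p` onto its regular part; this realizes `R_p = Λ_p / I_p`
as the subspace of `Λ_p` spanned by the regular elementary paths. -/
noncomputable def regProj (K : Type*) [Field K] (V : Type*) (p : ℕ) :
    (EPath V p →₀ K) →ₗ[K] (EPath V p →₀ K) :=
  Finsupp.linearCombination K
    (fun f : EPath V p => if IsRegularPath f then Finsupp.single f (1 : K) else 0)

/-- The (non-reduced) boundary operator on `Λ`. -/
noncomputable def bdryFull (K : Type*) [Field K] (V : Type*) (p : ℕ) :
    (EPath V (p + 1) →₀ K) →ₗ[K] (EPath V p →₀ K) :=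
  Finsupp.linearCombination K
    (fun f : EPath V (p + 1) =>
      ∑ q : Fin (p + 2), ((-1 : K) ^ (q : ℕ)) • Finsupp.single (f ∘ q.succAbove) (1 : K))

/-- The boundary operator `∂` on the regular part (i.e. on `R`). -/
noncomputable def bdry (K : Type*) [Field K] (V : Type*) (p : ℕ) :
    (EPath V (p + 1) →₀ K) →ₗ[K] (EPath V p →₀ K) :=
  (regProj K V p).comp (bdryFull K V p)

/-- The span of the regular elementary paths: the realization of `R_p` inside `Λ_p`. -/
noncomputable def regularMod (K : Type*) [Field K] (V : Type*) (p : ℕ) :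
    Submodule K (EPath V p →₀ K) :=
  Submodule.span K {x | ∃ f : EPath V p, IsRegularPath f ∧ x = Finsupp.single f (1 : K)}

/-- `A_p(G)`: the span of the allowed elementary paths. -/
noncomputable def allowedMod (K : Type*) [Field K] (V : Type*) (G : Dgraph V) (p : ℕ) :
    Submodule K (EPath V p →₀ K) :=
  Submodule.span K {x | ∃ f : EPath V p, IsAllowedPath G f ∧ x = Finsupp.single f (1 : K)}

/-- `Ω_p(G)`: the space of ∂-invariant `p`-paths. -/
noncomputable def Omega (K : Type*) [Field K] (V : Type*) (G : Dgraph V) :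
    (p : ℕ) → Submodule K (EPath V p →₀ K)
  | 0 => allowedMod K V G 0
  | (p + 1) => allowedMod K V G (p + 1) ⊓ (allowedMod K V G p).comap (bdry K V p)

/-- An `(a,b)`-cluster: every elementary path occurring with nonzero coefficient
starts at `a` and ends at `b`. -/
def IsCluster {K : Type*} [Field K] {V : Type*} {p : ℕ} (a b : V) (ω : EPath V p →₀ K) : Prop :=
  ∀ f ∈ ω.support, f 0 = a ∧ f (Fin.last p) = b

/-- A minimal ∂-invariant path: a nonzero element of `Ω_p` such that no nonzero
∂-invariant path is supported on a proper (nonempty) subset of its support. -/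
def IsMinimal (K : Type*) [Field K] {V : Type*} (G : Dgraph V) (p : ℕ)
    (ω : EPath V p →₀ K) : Prop :=
  ω ∈ Omega K V G p ∧ ω ≠ 0 ∧
    ∀ ω' : EPath V p →₀ K, ω' ∈ Omega K V G p → ω' ≠ 0 → ¬ (ω'.support ⊂ ω.support)

/-- A digraph map: every arrow goes to an arrow or collapses to a vertex. -/
structure DgraphMap {V W : Type*} (X : Dgraph V) (Y : Dgraph W) where
  toFun : V → W
  map_adj : ∀ ⦃u v : V⦄, X.Adj u v → Y.Adj (toFun u) (toFun v) ∨ toFun u = toFun v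

/-- The induced map `f_* : R_n(X) → R_n(Y)` (in the regular-part realization):
push forward elementary paths and kill the irregular ones. -/
noncomputable def inducedMap (K : Type*) [Field K] {V W : Type*} (φ : V → W) (p : ℕ) :
    (EPath V p →₀ K) →ₗ[K] (EPath W p →₀ K) :=
  (regProj K W p).comp (Finsupp.lmapDomain K K (fun f : EPath V p => φ ∘ f))

/-- Cyclic successor on `Fin m`. -/
def finRot {m : ℕ} (k : Fin m) : Fin m := ⟨((k : ℕ) + 1) % m, Nat.mod_lt _ k.pos⟩

/-- The vertices of the trapezohedron `T_m`. -/
inductive TVert (m : ℕ) : Type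
  | a : TVert m
  | b : TVert m
  | vi : Fin m → TVert m
  | vj : Fin m → TVert m

/-- The adjacency relation of the trapezohedron `T_m`:
`a → i_k`, `i_k → j_k`, `i_{k+1} → j_k`, `j_k → b` (indices mod `m`). -/
def TrapAdj (m : ℕ) : TVert m → TVert m → Prop
  | TVert.a, TVert.vi _ => True
  | TVert.vi k, TVert.vj l => k = l ∨ k = finRot l
  | TVert.vj _, TVert.b => True
  | _, _ => False

/-- The trapezohedron digraph `T_m`. -/
def Trap (m : ℕ) : Dgraph (TVert m) where
  Adj := TrapAdj m
  loopless := by intro v h; cases v <;> exact h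

/-- The trapezohedral path `τ_m`. -/
noncomputable def tau (K : Type*) [Field K] (m : ℕ) : EPath (TVert m) 3 →₀ K :=
  ∑ k : Fin m,
    (Finsupp.single ![TVert.a, TVert.vi k, TVert.vj k, TVert.b] (1 : K)
      - Finsupp.single ![TVert.a, TVert.vi (finRot k), TVert.vj k, TVert.b] (1 : K))

/-- The submodule of `(a,b)`-clusters. -/
def clusterMod (K : Type*) [Field K] (V : Type*) (p : ℕ) (a b : V) :
    Submodule K (EPath V p →₀ K) where
  carrier := {ω | ∀ f ∈ ω.support, f 0 = a ∧ f (Fin.last p) = b}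
  add_mem' := by
    intro x y hx hy f hf
    rcases Finset.mem_union.mp (Finsupp.support_add hf) with h | h
    exacts [hx f h, hy f h]
  zero_mem' := by intro f hf; simp at hf
  smul_mem' := by
    intro c x hx f hf
    exact hx f (Finsupp.support_smul hf)

/-- `Ω₃^{(a,b)}(G)`: the ∂-invariant `(a,b)`-clusters. -/
noncomputable def OmegaAB (K : Type*) [Field K] (V : Type*) (G : Dgraph V) (a b : V) :
    Submodule K (EPath V 3 →₀ K) :=
  Omega K V G 3 ⊓ clusterMod K V 3 a b

/-- Out-neighbourhood. -/
def Nplus {V : Type*} (G : Dgraph V) (v : V) : Set V := {w | G.Adj v w}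

/-- In-neighbourhood. -/
def Nminus {V : Type*} (G : Dgraph V) (v : V) : Set V := {w | G.Adj w v}

/-- `E(X,Y)`: the edges of `G` starting in `X` and ending in `Y`. -/
def Ebetween {V : Type*} (G : Dgraph V) (X Y : Set V) : Set (V × V) :=
  {p | p.1 ∈ X ∧ p.2 ∈ Y ∧ G.Adj p.1 p.2}

/-- `A = N⁺(a) \ {b}`. -/
def setA {V : Type*} (G : Dgraph V) (a b : V) : Set V := Nplus G a \ {b}

/-- `B = N⁻(b) \ {a}`. -/
def setB {V : Type*} (G : Dgraph V) (a b : V) : Set V := Nminus G b \ {a}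

/-- The vertex set of `H = Ind(A \ B, B \ A)`. -/
def Hverts {V : Type*} (G : Dgraph V) (a b : V) : Set V :=
  (setA G a b \ setB G a b) ∪ (setB G a b \ setA G a b)

/-- `H = Ind(A \ B, B \ A)` regarded as an undirected (simple) graph on its vertex set. -/
def Hgraph {V : Type*} (G : Dgraph V) (a b : V) : SimpleGraph (Hverts G a b) where
  Adj u v :=
    ((u : V) ∈ setA G a b \ setB G a b ∧ (v : V) ∈ setB G a b \ setA G a b ∧ G.Adj u v)
      ∨ ((v : V) ∈ setA G a b \ setB G a b ∧ (u : V) ∈ setB G a b \ setA G a b ∧ G.Adj v u)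
  symm := ⟨by intro u v h; exact h.symm⟩
  loopless := ⟨by
    intro u h
    rcases h with ⟨_, _, h3⟩ | ⟨_, _, h3⟩ <;> exact G.loopless _ h3⟩

/-- The set of vertices of `G` belonging to the connected component `c` of `H`. -/
def compVerts {V : Type*} (G : Dgraph V) (a b : V)
    (c : (Hgraph G a b).ConnectedComponent) : Set V :=
  {v | ∃ h : v ∈ Hverts G a b, (Hgraph G a b).connectedComponentMk ⟨v, h⟩ = c}

/-- The set `S_k` associated to a connected component of `H`. -/
def Sset {V : Type*} (G : Dgraph V) (a b : V)
    (c : (Hgraph G a b).ConnectedComponent) : Set (V × V) :=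
  Ebetween G (compVerts G a b c ∩ (setA G a b \ setB G a b))
      ((Nplus G a ∪ {a}) ∩ Nminus G b)
    ∪ Ebetween G (Nplus G a ∩ (Nminus G b ∪ {b}))
      (compVerts G a b c ∩ (setB G a b \ setA G a b))

namespace St15
set_option linter.unusedSectionVars false
variable {K : Type*} [Field K] {V : Type*} [Fintype V] (G : Dgraph V) (a b : V)

/-- `X = A \ B`. -/
def sX : Set V := setA G a b \ setB G a b
/-- `Y = B \ A`. -/
def sY : Set V := setB G a b \ setA G a b
/-- edges of `H` -/
def Eh : Set (V × V) := Ebetween G (sX G a b) (sY G a b)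

lemma mem_sX {i : V} (h : i ∈ sX G a b) :
    G.Adj a i ∧ ¬ G.Adj i b ∧ i ≠ b ∧ i ≠ a := by
  obtain ⟨⟨h1, h2⟩, h3⟩ := h
  have hia : i ≠ a := by rintro rfl; exact G.loopless _ h1
  refine ⟨h1, ?_, h2, hia⟩
  intro hib; exact h3 ⟨hib, hia⟩

lemma mem_sY {j : V} (h : j ∈ sY G a b) :
    G.Adj j b ∧ ¬ G.Adj a j ∧ j ≠ a ∧ j ≠ b := by
  obtain ⟨⟨h1, h2⟩, h3⟩ := h
  have hjb : j ≠ b := by rintro rfl; exact G.loopless _ h1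
  refine ⟨h1, ?_, h2, hjb⟩
  intro haj; exact h3 ⟨haj, hjb⟩

lemma sX_disj_sY {i : V} (hX : i ∈ sX G a b) (hY : i ∈ sY G a b) : False :=
  (mem_sX G a b hX).2.1 (mem_sY G a b hY).1

lemma a_not_mem_sX : a ∉ sX G a b := fun h => (mem_sX G a b h).2.2.2 rfl

lemma Hverts_eq : Hverts G a b = sX G a b ∪ sY G a b := rfl

lemma mem_Hv_left {i : V} (h : i ∈ sX G a b) : i ∈ Hverts G a b := Or.inl h
lemma mem_Hv_right {j : V} (h : j ∈ sY G a b) : j ∈ Hverts G a b := Or.inr h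

/-- the 3-path associated to an edge of `H` -/
def pth (e : ↥(Eh G a b)) : EPath V 3 := ![a, e.1.1, e.1.2, b]

lemma pth_injective : Function.Injective (pth G a b) := by
  intro e e' h
  have h1 : e.1.1 = e'.1.1 := congrFun h 1
  have h2 : e.1.2 = e'.1.2 := congrFun h 2
  exact Subtype.ext (Prod.ext h1 h2)

lemma tuple3_eq_iff {x y z x' y' z' : V} :
    (![x,y,z] = ![x',y',z']) ↔ (x = x' ∧ y = y' ∧ z = z') := by
  constructor
  · intro h; exact ⟨congrFun h 0, congrFun h 1, congrFun h 2⟩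
  · rintro ⟨rfl, rfl, rfl⟩; rfl

lemma allowedMod_eq (p : ℕ) :
    allowedMod K V G p = Finsupp.supported K K {f | IsAllowedPath G f} := by
  rw [Finsupp.supported_eq_span_single, allowedMod]
  congr 1
  ext x
  simp only [Set.mem_setOf_eq, Set.mem_image]
  constructor
  · rintro ⟨f, hf, rfl⟩; exact ⟨f, hf, rfl⟩
  · rintro ⟨f, hf, rfl⟩; exact ⟨f, hf, rfl⟩

lemma mem_allowedMod {p : ℕ} {ω : EPath V p →₀ K} :
    ω ∈ allowedMod K V G p ↔ ∀ f, ¬ IsAllowedPath G f → ω f = 0 := by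
  rw [allowedMod_eq, Finsupp.mem_supported']
  exact ⟨fun h f hf => h f hf, fun h f hf => h f hf⟩

lemma regProj_single {p : ℕ} (f : EPath V p) :
    regProj K V p (Finsupp.single f 1)
      = if IsRegularPath f then Finsupp.single f 1 else 0 := by
  simp [regProj]

lemma bdry_single {p : ℕ} (f : EPath V (p+1)) :
    bdry K V p (Finsupp.single f 1)
      = ∑ q : Fin (p+2), ((-1 : K) ^ (q : ℕ)) •
          (if IsRegularPath (f ∘ q.succAbove) then Finsupp.single (f ∘ q.succAbove) (1:K)
           else 0) := by
  rw [bdry, LinearMap.comp_apply]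
  have : bdryFull K V p (Finsupp.single f 1)
      = ∑ q : Fin (p+2), ((-1 : K) ^ (q : ℕ)) • Finsupp.single (f ∘ q.succAbove) (1 : K) := by
    simp [bdryFull]
  rw [this, map_sum]
  refine Finset.sum_congr rfl fun q _ => ?_
  rw [LinearMap.map_smul, regProj_single]

lemma reg3 {x y z : V} (h1 : x ≠ y) (h2 : y ≠ z) : IsRegularPath ![x,y,z] := by
  intro k; fin_cases k
  · exact h1
  · exact h2

/-- boundary of a good quadruple -/
lemma bdry_quad {i j : V} (hai : a ≠ i) (hij : i ≠ j) (hjb : j ≠ b)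
    (haj : a ≠ j) (hib : i ≠ b) :
    bdry K V 2 (Finsupp.single ![a,i,j,b] 1)
      = Finsupp.single ![i,j,b] 1 - Finsupp.single ![a,j,b] 1
        + Finsupp.single ![a,i,b] 1 - Finsupp.single ![a,i,j] 1 := by
  rw [bdry_single, Fin.sum_univ_four]
  have e0 : (![a,i,j,b] ∘ (0 : Fin 4).succAbove) = ![i,j,b] := by
    funext k; fin_cases k <;> rfl
  have e1 : (![a,i,j,b] ∘ (1 : Fin 4).succAbove) = ![a,j,b] := by
    funext k; fin_cases k <;> rfl
  have e2 : (![a,i,j,b] ∘ (2 : Fin 4).succAbove) = ![a,i,b] := by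
    funext k; fin_cases k <;> rfl
  have e3 : (![a,i,j,b] ∘ (3 : Fin 4).succAbove) = ![a,i,j] := by
    funext k; fin_cases k <;> rfl
  rw [e0, e1, e2, e3]
  rw [if_pos (reg3 hij hjb), if_pos (reg3 haj hjb), if_pos (reg3 hai hib),
    if_pos (reg3 hai hij)]
  have h0 : ((0:Fin 4):ℕ) = 0 := rfl
  have h1 : ((1:Fin 4):ℕ) = 1 := rfl
  have h2 : ((2:Fin 4):ℕ) = 2 := rfl
  have h3 : ((3:Fin 4):ℕ) = 3 := rfl
  rw [h0, h1, h2, h3]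
  module

end St15
namespace St15
set_option linter.unusedSectionVars false
variable {K : Type*} [Field K] {V : Type*} [Fintype V] (G : Dgraph V) (a b : V)
variable (K)

/-- terminal-free submodule -/
def Tmod : Submodule K (EPath V 3 →₀ K) where
  carrier := {ω | ∀ f : EPath V 3,
    ((G.Adj a (f 2) ∨ a = f 2) ∨ (G.Adj (f 1) b ∨ f 1 = b)) → ω f = 0}
  add_mem' := by intro x y hx hy f hf; simp [hx f hf, hy f hf]
  zero_mem' := by intro f _; rfl
  smul_mem' := by intro c x hx f hf; simp [hx f hf]

/-- the submodule `S` -/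
noncomputable def Smod : Submodule K (EPath V 3 →₀ K) := OmegaAB K V G a b ⊓ Tmod K G a b

/-- evaluation map to edge space -/
noncomputable def Fmap : (EPath V 3 →₀ K) →ₗ[K] (↥(Eh G a b) → K) :=
  LinearMap.pi fun e => Finsupp.lapply (pth G a b e)

/-- reconstruction map from edge space -/
noncomputable def Bmap : (↥(Eh G a b) → K) →ₗ[K] (EPath V 3 →₀ K) :=
  ∑ e, (Finsupp.lsingle (pth G a b e)).comp (LinearMap.proj e)

lemma Fmap_apply (ω : EPath V 3 →₀ K) (e : ↥(Eh G a b)) :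
    Fmap K G a b ω e = ω (pth G a b e) := rfl

lemma Bmap_apply (g : ↥(Eh G a b) → K) :
    Bmap K G a b g = ∑ e, Finsupp.single (pth G a b e) (g e) := by
  rw [Bmap, LinearMap.sum_apply]
  rfl

/-- incidence matrix of H -/
noncomputable def Minc : Matrix ↥(Hverts G a b) ↥(Eh G a b) K :=
  fun v e => (if (e : V × V).1 = ↑v then 1 else 0) + (if (e : V × V).2 = ↑v then 1 else 0)

lemma mulVecLin_Minc (g : ↥(Eh G a b) → K) (v : ↥(Hverts G a b)) :
    (Minc K G a b).mulVecLin g v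
      = (∑ e ∈ Finset.univ.filter (fun e : ↥(Eh G a b) => (e : V × V).1 = ↑v), g e)
        + (∑ e ∈ Finset.univ.filter (fun e : ↥(Eh G a b) => (e : V × V).2 = ↑v), g e) := by
  rw [Matrix.mulVecLin_apply]
  show ∑ e, Minc K G a b v e * g e = _
  rw [Finset.sum_filter, Finset.sum_filter, ← Finset.sum_add_distrib]
  refine Finset.sum_congr rfl fun e _ => ?_
  rw [Minc]
  by_cases h1 : (e : V × V).1 = ↑v <;> by_cases h2 : (e : V × V).2 = ↑v
  · exact absurd (h2 ▸ e.2.2.1) (fun h => sX_disj_sY G a b (h1 ▸ e.2.1) h)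
  all_goals simp [h1, h2]

lemma filter_fst_empty {i : V} (hi : i ∉ sX G a b) :
    (Finset.univ.filter (fun e : ↥(Eh G a b) => (e : V × V).1 = i)) = ∅ := by
  refine Finset.filter_false_of_mem fun e _ => ?_
  intro h
  exact hi (h ▸ e.2.1)

lemma filter_snd_empty {j : V} (hj : j ∉ sY G a b) :
    (Finset.univ.filter (fun e : ↥(Eh G a b) => (e : V × V).2 = j)) = ∅ := by
  refine Finset.filter_false_of_mem fun e _ => ?_
  intro h
  exact hj (h ▸ e.2.2.1)

/-- kernel condition gives vanishing of the fiber sums over first coordinates -/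
lemma ker_fiber_fst {g : ↥(Eh G a b) → K}
    (hg : (Minc K G a b).mulVecLin g = 0) (i : V) :
    ∑ e ∈ Finset.univ.filter (fun e : ↥(Eh G a b) => (e : V × V).1 = i), g e = 0 := by
  by_cases hi : i ∈ sX G a b
  · have h0 := congrFun hg ⟨i, mem_Hv_left G a b hi⟩
    rw [mulVecLin_Minc] at h0
    have hvi : ((⟨i, mem_Hv_left G a b hi⟩ : ↥(Hverts G a b)) : V) = i := rfl
    rw [hvi, filter_snd_empty G a b (fun h => sX_disj_sY G a b hi h)] at h0
    simpa using h0
  · rw [filter_fst_empty G a b hi, Finset.sum_empty]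

lemma ker_fiber_snd {g : ↥(Eh G a b) → K}
    (hg : (Minc K G a b).mulVecLin g = 0) (j : V) :
    ∑ e ∈ Finset.univ.filter (fun e : ↥(Eh G a b) => (e : V × V).2 = j), g e = 0 := by
  by_cases hj : j ∈ sY G a b
  · have h0 := congrFun hg ⟨j, mem_Hv_right G a b hj⟩
    rw [mulVecLin_Minc] at h0
    have hvj : ((⟨j, mem_Hv_right G a b hj⟩ : ↥(Hverts G a b)) : V) = j := rfl
    rw [hvj, filter_fst_empty G a b (fun h => sX_disj_sY G a b h hj)] at h0
    simpa using h0
  · rw [filter_snd_empty G a b hj, Finset.sum_empty]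

end St15
namespace St15
set_option linter.unusedSectionVars false
variable {K : Type*} [Field K] {V : Type*} [Fintype V] (G : Dgraph V) (a b : V)
variable (K)

lemma single_mem_allowedMod {p : ℕ} {f : EPath V p} (hf : IsAllowedPath G f) :
    Finsupp.single f (1 : K) ∈ allowedMod K V G p :=
  Submodule.subset_span ⟨f, hf, rfl⟩

lemma pth_allowed (e : ↥(Eh G a b)) : IsAllowedPath G (pth G a b e) := by
  obtain ⟨hx, hy, hadj⟩ := e.2
  intro k; fin_cases k
  · exact (mem_sX G a b hx).1
  · exact hadj
  · exact (mem_sY G a b hy).1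

lemma bdry_Bmap (g : ↥(Eh G a b) → K) :
    bdry K V 2 (Bmap K G a b g)
      = ∑ e : ↥(Eh G a b), g e •
          (Finsupp.single ![(e : V × V).1, (e : V × V).2, b] (1:K)
            - Finsupp.single ![a, (e : V × V).2, b] 1
            + Finsupp.single ![a, (e : V × V).1, b] 1
            - Finsupp.single ![a, (e : V × V).1, (e : V × V).2] 1) := by
  rw [Bmap_apply, map_sum]
  refine Finset.sum_congr rfl fun e _ => ?_
  obtain ⟨hx, hy, hadj⟩ := e.2
  obtain ⟨hadjai, hnib, hib, hia⟩ := mem_sX G a b hx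
  obtain ⟨hadjjb, hnaj, hja, hjb⟩ := mem_sY G a b hy
  have h1 : Finsupp.single (pth G a b e) (g e) = g e • Finsupp.single (pth G a b e) (1:K) := by
    rw [Finsupp.smul_single', mul_one]
  rw [h1, LinearMap.map_smul]
  congr 1
  exact bdry_quad a b (Ne.symm hia) (fun h => G.loopless _ (h ▸ hadj)) hjb (Ne.symm hja) hib

lemma sum_fiber_fst_smul {g : ↥(Eh G a b) → K}
    (hg : (Minc K G a b).mulVecLin g = 0) :
    ∑ e : ↥(Eh G a b), g e • Finsupp.single ![a, (e : V × V).1, b] (1:K) = 0 := by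
  rw [← Finset.sum_fiberwise Finset.univ (fun e : ↥(Eh G a b) => (e : V × V).1)
    (fun e => g e • Finsupp.single ![a, (e : V × V).1, b] (1:K))]
  refine Finset.sum_eq_zero fun i _ => ?_
  have hcongr : ∀ e ∈ Finset.univ.filter (fun e : ↥(Eh G a b) => (e : V × V).1 = i),
      g e • Finsupp.single ![a, (e : V × V).1, b] (1:K)
        = g e • Finsupp.single ![a, i, b] (1:K) := by
    intro e he; rw [(Finset.mem_filter.mp he).2]
  rw [Finset.sum_congr rfl hcongr, ← Finset.sum_smul, ker_fiber_fst K G a b hg i, zero_smul]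

lemma sum_fiber_snd_smul {g : ↥(Eh G a b) → K}
    (hg : (Minc K G a b).mulVecLin g = 0) :
    ∑ e : ↥(Eh G a b), g e • Finsupp.single ![a, (e : V × V).2, b] (1:K) = 0 := by
  rw [← Finset.sum_fiberwise Finset.univ (fun e : ↥(Eh G a b) => (e : V × V).2)
    (fun e => g e • Finsupp.single ![a, (e : V × V).2, b] (1:K))]
  refine Finset.sum_eq_zero fun j _ => ?_
  have hcongr : ∀ e ∈ Finset.univ.filter (fun e : ↥(Eh G a b) => (e : V × V).2 = j),
      g e • Finsupp.single ![a, (e : V × V).2, b] (1:K)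
        = g e • Finsupp.single ![a, j, b] (1:K) := by
    intro e he; rw [(Finset.mem_filter.mp he).2]
  rw [Finset.sum_congr rfl hcongr, ← Finset.sum_smul, ker_fiber_snd K G a b hg j, zero_smul]

lemma Bmap_coeff_shape {g : ↥(Eh G a b) → K} {f : EPath V 3}
    (hf : (Bmap K G a b g) f ≠ 0) : ∃ e : ↥(Eh G a b), f = pth G a b e := by
  rw [Bmap_apply, Finsupp.finset_sum_apply] at hf
  obtain ⟨e, _, he⟩ := Finset.exists_ne_zero_of_sum_ne_zero hf
  refine ⟨e, ?_⟩
  by_contra hne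
  exact he (Finsupp.single_eq_of_ne' (fun h => hne h.symm))

lemma Bmap_mem_Smod {g : ↥(Eh G a b) → K}
    (hg : (Minc K G a b).mulVecLin g = 0) : Bmap K G a b g ∈ Smod K G a b := by
  have hshape := fun {f} hf => Bmap_coeff_shape K G a b (g := g) (f := f) hf
  have hall : Bmap K G a b g ∈ allowedMod K V G 3 := by
    rw [mem_allowedMod]
    intro f hf
    by_contra h0
    obtain ⟨e, rfl⟩ := hshape h0
    exact hf (pth_allowed G a b e)
  have hbdry : bdry K V 2 (Bmap K G a b g) ∈ allowedMod K V G 2 := by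
    rw [bdry_Bmap]
    have hsplit : ∀ e : ↥(Eh G a b), g e •
          (Finsupp.single ![(e : V × V).1, (e : V × V).2, b] (1:K)
            - Finsupp.single ![a, (e : V × V).2, b] 1
            + Finsupp.single ![a, (e : V × V).1, b] 1
            - Finsupp.single ![a, (e : V × V).1, (e : V × V).2] 1)
        = g e • (Finsupp.single ![(e : V × V).1, (e : V × V).2, b] (1:K)
            - Finsupp.single ![a, (e : V × V).1, (e : V × V).2] 1)
          + (g e • Finsupp.single ![a, (e : V × V).1, b] (1:K)
            - g e • Finsupp.single ![a, (e : V × V).2, b] (1:K)) := by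
      intro e
      module
    rw [Finset.sum_congr rfl (fun e _ => hsplit e), Finset.sum_add_distrib,
      Finset.sum_sub_distrib, sum_fiber_fst_smul K G a b hg, sum_fiber_snd_smul K G a b hg,
      sub_zero, add_zero]
    refine Submodule.sum_mem _ fun e _ => Submodule.smul_mem _ _ (Submodule.sub_mem _ ?_ ?_)
    · refine single_mem_allowedMod K G ?_
      obtain ⟨hx, hy, hadj⟩ := e.2
      intro k; fin_cases k
      · exact hadj
      · exact (mem_sY G a b hy).1
    · refine single_mem_allowedMod K G ?_
      obtain ⟨hx, hy, hadj⟩ := e.2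
      intro k; fin_cases k
      · exact (mem_sX G a b hx).1
      · exact hadj
  have hclus : Bmap K G a b g ∈ clusterMod K V 3 a b := by
    intro f hf
    have h0 : (Bmap K G a b g) f ≠ 0 := Finsupp.mem_support_iff.mp hf
    obtain ⟨e, rfl⟩ := hshape h0
    exact ⟨rfl, rfl⟩
  have hterm : Bmap K G a b g ∈ Tmod K G a b := by
    intro f hterm'
    by_contra h0
    obtain ⟨e, rfl⟩ := hshape h0
    obtain ⟨hx, hy, hadj⟩ := e.2
    obtain ⟨-, hnaj, hja, -⟩ := mem_sY G a b hy
    obtain ⟨-, hnib, hib, -⟩ := mem_sX G a b hx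
    rcases hterm' with (h | h) | (h | h)
    · exact hnaj h
    · exact hja h.symm
    · exact hnib h
    · exact hib h
  exact ⟨⟨⟨hall, hbdry⟩, hclus⟩, hterm⟩

lemma Smod_shape {ω : EPath V 3 →₀ K} (hω : ω ∈ Smod K G a b) {f : EPath V 3}
    (hf : ω f ≠ 0) : ∃ e : ↥(Eh G a b), f = pth G a b e := by
  obtain ⟨⟨⟨hall, -⟩, hclus⟩, hterm⟩ := hω
  have hfs : f ∈ ω.support := Finsupp.mem_support_iff.mpr hf
  obtain ⟨hf0, hf3⟩ := hclus f hfs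
  have hallf : IsAllowedPath G f := by
    by_contra h; exact hf ((mem_allowedMod G).mp hall f h)
  have hnterm : ¬ ((G.Adj a (f 2) ∨ a = f 2) ∨ (G.Adj (f 1) b ∨ f 1 = b)) :=
    fun h => hf (hterm f h)
  have hnaj : ¬ G.Adj a (f 2) := fun h => hnterm (Or.inl (Or.inl h))
  have hna2 : a ≠ f 2 := fun h => hnterm (Or.inl (Or.inr h))
  have hnib : ¬ G.Adj (f 1) b := fun h => hnterm (Or.inr (Or.inl h))
  have hn1b : f 1 ≠ b := fun h => hnterm (Or.inr (Or.inr h))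
  have ha1 : G.Adj a (f 1) := hf0 ▸ hallf 0
  have h2b : G.Adj (f 2) b := by
    have h3 : f (Fin.last 3) = f 3 := rfl
    exact (h3 ▸ hf3 : f 3 = b) ▸ hallf 2
  have hx : f 1 ∈ sX G a b := by
    refine ⟨⟨ha1, hn1b⟩, ?_⟩
    rintro ⟨h, -⟩
    exact hnib h
  have hy : f 2 ∈ sY G a b := by
    refine ⟨⟨h2b, fun h => hna2 h.symm⟩, ?_⟩
    rintro ⟨h, -⟩
    exact hnaj h
  refine ⟨⟨(f 1, f 2), ⟨hx, hy, hallf 1⟩⟩, ?_⟩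
  funext k
  fin_cases k
  · exact hf0
  · rfl
  · rfl
  · exact hf3

lemma Bmap_Fmap {ω : EPath V 3 →₀ K} (hω : ω ∈ Smod K G a b) :
    Bmap K G a b (Fmap K G a b ω) = ω := by
  ext f
  rw [Bmap_apply, Finsupp.finset_sum_apply]
  by_cases hf : ∃ e : ↥(Eh G a b), pth G a b e = f
  · obtain ⟨e₀, he₀⟩ := hf
    rw [Finset.sum_eq_single e₀
      (fun e _ hne => Finsupp.single_eq_of_ne'
        (fun h => hne (pth_injective G a b (h.trans he₀.symm))))
      (fun h => absurd (Finset.mem_univ e₀) h)]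
    rw [Fmap_apply, he₀, Finsupp.single_eq_same]
  · have h0 : ω f = 0 := by
      by_contra h
      obtain ⟨e, rfl⟩ := Smod_shape K G a b hω h
      exact hf ⟨e, rfl⟩
    rw [h0]
    exact Finset.sum_eq_zero fun e _ => Finsupp.single_eq_of_ne' fun h => hf ⟨e, h⟩

lemma Fmap_Bmap (g : ↥(Eh G a b) → K) : Fmap K G a b (Bmap K G a b g) = g := by
  funext e
  rw [Fmap_apply, Bmap_apply, Finsupp.finset_sum_apply]
  rw [Finset.sum_eq_single e
    (fun e' _ hne => Finsupp.single_eq_of_ne' (fun h => hne (pth_injective G a b h)))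
    (fun h => absurd (Finset.mem_univ e) h)]
  exact Finsupp.single_eq_same

lemma bdry_Bmap_apply_fst (g : ↥(Eh G a b) → K) {c : V} (hc : c ∈ sX G a b) :
    (bdry K V 2 (Bmap K G a b g)) ![a, c, b]
      = ∑ e ∈ Finset.univ.filter (fun e : ↥(Eh G a b) => (e : V × V).1 = c), g e := by
  rw [bdry_Bmap, Finsupp.finset_sum_apply, Finset.sum_filter]
  refine Finset.sum_congr rfl fun e _ => ?_
  obtain ⟨hx, hy, hadj⟩ := e.2
  rw [Finsupp.smul_apply, Finsupp.sub_apply, Finsupp.add_apply, Finsupp.sub_apply,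
    Finsupp.single_apply, Finsupp.single_apply, Finsupp.single_apply, Finsupp.single_apply]
  have h1 : ¬ (![(e : V × V).1, (e : V × V).2, b] = ![a, c, b]) := by
    rw [tuple3_eq_iff]; rintro ⟨h, -, -⟩; exact (mem_sX G a b hx).2.2.2 h
  have h2 : ¬ (![a, (e : V × V).2, b] = ![a, c, b]) := by
    rw [tuple3_eq_iff]; rintro ⟨-, h, -⟩; exact sX_disj_sY G a b hc (h ▸ hy)
  have h4 : ¬ (![a, (e : V × V).1, (e : V × V).2] = ![a, c, b]) := by
    rw [tuple3_eq_iff]; rintro ⟨-, -, h⟩; exact (mem_sY G a b hy).2.2.2 h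
  have h3 : (![a, (e : V × V).1, b] = ![a, c, b]) ↔ (e : V × V).1 = c := by
    rw [tuple3_eq_iff]
    exact ⟨fun h => h.2.1, fun h => ⟨rfl, h, rfl⟩⟩
  rw [if_neg h1, if_neg h2, if_neg h4, if_congr h3 rfl rfl]
  by_cases h : (e : V × V).1 = c <;> simp [h]

lemma bdry_Bmap_apply_snd (g : ↥(Eh G a b) → K) {c : V} (hc : c ∈ sY G a b) :
    (bdry K V 2 (Bmap K G a b g)) ![a, c, b]
      = - ∑ e ∈ Finset.univ.filter (fun e : ↥(Eh G a b) => (e : V × V).2 = c), g e := by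
  rw [bdry_Bmap, Finsupp.finset_sum_apply, Finset.sum_filter, ← Finset.sum_neg_distrib]
  refine Finset.sum_congr rfl fun e _ => ?_
  obtain ⟨hx, hy, hadj⟩ := e.2
  rw [Finsupp.smul_apply, Finsupp.sub_apply, Finsupp.add_apply, Finsupp.sub_apply,
    Finsupp.single_apply, Finsupp.single_apply, Finsupp.single_apply, Finsupp.single_apply]
  have h1 : ¬ (![(e : V × V).1, (e : V × V).2, b] = ![a, c, b]) := by
    rw [tuple3_eq_iff]; rintro ⟨h, -, -⟩; exact (mem_sX G a b hx).2.2.2 h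
  have h3 : ¬ (![a, (e : V × V).1, b] = ![a, c, b]) := by
    rw [tuple3_eq_iff]; rintro ⟨-, h, -⟩; exact sX_disj_sY G a b (h ▸ hx) hc
  have h4 : ¬ (![a, (e : V × V).1, (e : V × V).2] = ![a, c, b]) := by
    rw [tuple3_eq_iff]; rintro ⟨-, -, h⟩; exact (mem_sY G a b hy).2.2.2 h
  have h2 : (![a, (e : V × V).2, b] = ![a, c, b]) ↔ (e : V × V).2 = c := by
    rw [tuple3_eq_iff]
    exact ⟨fun h => h.2.1, fun h => ⟨rfl, h, rfl⟩⟩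
  rw [if_neg h1, if_neg h3, if_neg h4, if_congr h2 rfl rfl]
  by_cases h : (e : V × V).2 = c <;> simp [h]

lemma Smod_mem_ker {ω : EPath V 3 →₀ K} (hω : ω ∈ Smod K G a b) :
    (Minc K G a b).mulVecLin (Fmap K G a b ω) = 0 := by
  have hB : Bmap K G a b (Fmap K G a b ω) = ω := Bmap_Fmap K G a b hω
  have hbdry : bdry K V 2 ω ∈ allowedMod K V G 2 := hω.1.1.2
  funext v
  simp only [Pi.zero_apply]
  rw [mulVecLin_Minc]
  rcases v.2 with hvx | hvy
  · rw [filter_snd_empty G a b (fun h => sX_disj_sY G a b hvx h), Finset.sum_empty, add_zero]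
    have heval := bdry_Bmap_apply_fst K G a b (Fmap K G a b ω) hvx
    rw [hB] at heval
    rw [← heval]
    refine (mem_allowedMod G).mp hbdry _ ?_
    intro hallow
    exact (mem_sX G a b hvx).2.1 (hallow 1)
  · rw [filter_fst_empty G a b (fun h => sX_disj_sY G a b h hvy), Finset.sum_empty, zero_add]
    have heval := bdry_Bmap_apply_snd K G a b (Fmap K G a b ω) hvy
    rw [hB] at heval
    have h0 : bdry K V 2 ω ![a, ↑v, b] = 0 := by
      refine (mem_allowedMod G).mp hbdry _ ?_
      intro hallow
      exact (mem_sY G a b hvy).2.1 (hallow 0)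
    rw [h0] at heval
    exact (neg_eq_zero.mp heval.symm)

end St15
namespace St15
open Matrix
set_option linter.unusedSectionVars false
variable {K : Type*} [Field K] {V : Type*} [Fintype V] (G : Dgraph V) (a b : V)
variable (K)

/-- first endpoint as a vertex of H -/
def vfst (e : ↥(Eh G a b)) : ↥(Hverts G a b) := ⟨(e : V × V).1, mem_Hv_left G a b e.2.1⟩
/-- second endpoint as a vertex of H -/
def vsnd (e : ↥(Eh G a b)) : ↥(Hverts G a b) := ⟨(e : V × V).2, mem_Hv_right G a b e.2.2.1⟩

lemma mulVecLin_transpose (h : ↥(Hverts G a b) → K) (e : ↥(Eh G a b)) :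
    (Minc K G a b)ᵀ.mulVecLin h e = h (vfst G a b e) + h (vsnd G a b e) := by
  show ∑ v, (Minc K G a b) v e * h v = _
  have hterm : ∀ v : ↥(Hverts G a b), (Minc K G a b) v e * h v
      = (if v = vfst G a b e then h v else 0) + (if v = vsnd G a b e then h v else 0) := by
    intro v
    have h1 : ((e : V × V).1 = ↑v) ↔ v = vfst G a b e :=
      ⟨fun h => Subtype.ext h.symm, fun h => by rw [h]; rfl⟩
    have h2 : ((e : V × V).2 = ↑v) ↔ v = vsnd G a b e :=
      ⟨fun h => Subtype.ext h.symm, fun h => by rw [h]; rfl⟩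
    rw [Minc, if_congr h1 rfl rfl, if_congr h2 rfl rfl, add_mul, ite_mul, ite_mul,
      one_mul, zero_mul]
  rw [Finset.sum_congr rfl fun v _ => hterm v, Finset.sum_add_distrib,
    Finset.sum_ite_eq' Finset.univ (vfst G a b e) h,
    Finset.sum_ite_eq' Finset.univ (vsnd G a b e) h,
    if_pos (Finset.mem_univ _), if_pos (Finset.mem_univ _)]

/-- sign of a vertex of H -/
noncomputable def sgn (v : ↥(Hverts G a b)) : K := if (v : V) ∈ sX G a b then 1 else -1

lemma sgn_ne_zero (v : ↥(Hverts G a b)) : sgn K G a b v ≠ 0 := by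
  rw [sgn]
  split
  · exact one_ne_zero
  · exact neg_ne_zero.mpr one_ne_zero

lemma sgn_mul_self (v : ↥(Hverts G a b)) : sgn K G a b v * sgn K G a b v = 1 := by
  rw [sgn]
  split
  · rw [one_mul]
  · rw [neg_mul_neg, one_mul]

lemma ker_step {h : ↥(Hverts G a b) → K}
    (hk : (Minc K G a b)ᵀ.mulVecLin h = 0) {u v : ↥(Hverts G a b)}
    (hadj : (Hgraph G a b).Adj u v) :
    sgn K G a b u * h u = sgn K G a b v * h v := by
  rcases hadj with ⟨hu, hv, hadj'⟩ | ⟨hv, hu, hadj'⟩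
  · have he : ((u : V), (v : V)) ∈ Eh G a b := ⟨hu, hv, hadj'⟩
    have h0 : h (vfst G a b ⟨_, he⟩) + h (vsnd G a b ⟨_, he⟩) = 0 := by
      have := congrFun hk ⟨_, he⟩
      rwa [mulVecLin_transpose, Pi.zero_apply] at this
    have e1 : vfst G a b ⟨_, he⟩ = u := Subtype.ext rfl
    have e2 : vsnd G a b ⟨_, he⟩ = v := Subtype.ext rfl
    rw [e1, e2] at h0
    have su : sgn K G a b u = 1 := if_pos hu
    have sv : sgn K G a b v = -1 := if_neg (fun hx => sX_disj_sY G a b hx hv)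
    rw [su, sv, one_mul, neg_one_mul]
    exact eq_neg_of_add_eq_zero_left h0
  · have he : ((v : V), (u : V)) ∈ Eh G a b := ⟨hv, hu, hadj'⟩
    have h0 : h (vfst G a b ⟨_, he⟩) + h (vsnd G a b ⟨_, he⟩) = 0 := by
      have := congrFun hk ⟨_, he⟩
      rwa [mulVecLin_transpose, Pi.zero_apply] at this
    have e1 : vfst G a b ⟨_, he⟩ = v := Subtype.ext rfl
    have e2 : vsnd G a b ⟨_, he⟩ = u := Subtype.ext rfl
    rw [e1, e2] at h0
    have su : sgn K G a b u = -1 := if_neg (fun hx => sX_disj_sY G a b hx hu)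
    have sv : sgn K G a b v = 1 := if_pos hv
    rw [su, sv, one_mul, neg_one_mul]
    exact (eq_neg_of_add_eq_zero_left h0).symm

lemma ker_prop {h : ↥(Hverts G a b) → K}
    (hk : (Minc K G a b)ᵀ.mulVecLin h = 0) :
    ∀ u v : ↥(Hverts G a b), (Hgraph G a b).Reachable u v →
      sgn K G a b u * h u = sgn K G a b v * h v := by
  intro u v hr
  obtain ⟨w⟩ := hr
  induction w with
  | nil => rfl
  | cons hadj _ ih => exact (ker_step K G a b hk hadj).trans ih

/-- the map from the kernel of the transposed incidence matrix to component functions -/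
noncomputable def Phi : ↥(LinearMap.ker (Minc K G a b)ᵀ.mulVecLin) →ₗ[K]
    ((Hgraph G a b).ConnectedComponent → K) :=
  LinearMap.pi fun c => (sgn K G a b c.out) •
    ((LinearMap.proj c.out).comp (Submodule.subtype _))

lemma Phi_apply (h : ↥(LinearMap.ker (Minc K G a b)ᵀ.mulVecLin))
    (c : (Hgraph G a b).ConnectedComponent) :
    Phi K G a b h c = sgn K G a b c.out * (h : ↥(Hverts G a b) → K) c.out := rfl

lemma Phi_inj : Function.Injective (Phi K G a b) := by
  rw [injective_iff_map_eq_zero]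
  intro h hh
  refine Subtype.ext (funext fun v => ?_)
  have hc : (Hgraph G a b).connectedComponentMk
      ((Hgraph G a b).connectedComponentMk v).out
        = (Hgraph G a b).connectedComponentMk v :=
    Quot.out_eq _
  have hr : (Hgraph G a b).Reachable ((Hgraph G a b).connectedComponentMk v).out v :=
    SimpleGraph.ConnectedComponent.exact hc
  have hk : (Minc K G a b)ᵀ.mulVecLin (h : ↥(Hverts G a b) → K) = 0 :=
    LinearMap.mem_ker.mp h.2
  have h0 := congrFun hh ((Hgraph G a b).connectedComponentMk v)
  rw [Phi_apply, Pi.zero_apply] at h0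
  have hprop := ker_prop K G a b hk _ v hr
  rw [h0] at hprop
  have := hprop.symm
  rcases mul_eq_zero.mp this with h' | h'
  · exact absurd h' (sgn_ne_zero K G a b v)
  · exact h'

lemma Phi_surj : Function.Surjective (Phi K G a b) := by
  intro x
  have hker : (Minc K G a b)ᵀ.mulVecLin
      (fun v => sgn K G a b v * x ((Hgraph G a b).connectedComponentMk v)) = 0 := by
    funext e
    rw [mulVecLin_transpose, Pi.zero_apply]
    have hadj : (Hgraph G a b).Adj (vfst G a b e) (vsnd G a b e) :=
      Or.inl ⟨e.2.1, e.2.2.1, e.2.2.2⟩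
    have hc : (Hgraph G a b).connectedComponentMk (vfst G a b e)
        = (Hgraph G a b).connectedComponentMk (vsnd G a b e) :=
      SimpleGraph.ConnectedComponent.connectedComponentMk_eq_of_adj hadj
    have s1 : sgn K G a b (vfst G a b e) = 1 := if_pos e.2.1
    have s2 : sgn K G a b (vsnd G a b e) = -1 :=
      if_neg (fun hx => sX_disj_sY G a b hx e.2.2.1)
    rw [hc, s1, s2, one_mul, neg_one_mul, add_neg_cancel]
  refine ⟨⟨_, LinearMap.mem_ker.mpr hker⟩, funext fun c => ?_⟩
  rw [Phi_apply]
  show sgn K G a b c.out * (sgn K G a b c.out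
    * x ((Hgraph G a b).connectedComponentMk c.out)) = x c
  rw [← mul_assoc, sgn_mul_self, one_mul]
  congr 1
  exact Quot.out_eq c

lemma finrank_kerT :
    Module.finrank K ↥(LinearMap.ker (Minc K G a b)ᵀ.mulVecLin)
      = Nat.card ((Hgraph G a b).ConnectedComponent) := by
  haveI : Fintype ((Hgraph G a b).ConnectedComponent) := Fintype.ofFinite _
  rw [(LinearEquiv.ofBijective (Phi K G a b)
    ⟨Phi_inj K G a b, Phi_surj K G a b⟩).finrank_eq]
  rw [Module.finrank_pi, Nat.card_eq_fintype_card]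

end St15
namespace St15
open Matrix
set_option linter.unusedSectionVars false
variable {K : Type*} [Field K] {V : Type*} [Fintype V] (G : Dgraph V) (a b : V)
variable (K)

lemma Smod_le : Smod K G a b ≤ OmegaAB K V G a b := inf_le_left

lemma Smod_carrier :
    ((Smod K G a b : Submodule K (EPath V 3 →₀ K)) : Set (EPath V 3 →₀ K)) =
      {ω | ω ∈ OmegaAB K V G a b ∧ ∀ f ∈ ω.support,
          ¬ ((G.Adj a (f 2) ∨ a = f 2) ∨ (G.Adj (f 1) b ∨ f 1 = b))} := by
  ext ω
  constructor
  · rintro ⟨hΩ, hT⟩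
    refine ⟨hΩ, fun f hf hterm => ?_⟩
    exact Finsupp.mem_support_iff.mp hf (hT f hterm)
  · rintro ⟨hΩ, hT⟩
    refine ⟨hΩ, fun f hterm => ?_⟩
    by_contra h0
    exact hT f (Finsupp.mem_support_iff.mpr h0) hterm

lemma finrank_Smod_eq_ker :
    Module.finrank K ↥(Smod K G a b)
      = Module.finrank K ↥(LinearMap.ker (Minc K G a b).mulVecLin) := by
  have hmap : ∀ ω ∈ Smod K G a b,
      Fmap K G a b ω ∈ LinearMap.ker (Minc K G a b).mulVecLin := by
    intro ω hω
    exact LinearMap.mem_ker.mpr (Smod_mem_ker K G a b hω)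
  refine LinearEquiv.finrank_eq (LinearEquiv.ofBijective
    ((Fmap K G a b).restrict hmap) ⟨?_, ?_⟩)
  · intro x y hxy
    have h1 : Fmap K G a b (x : EPath V 3 →₀ K) = Fmap K G a b (y : EPath V 3 →₀ K) :=
      congrArg Subtype.val hxy
    refine Subtype.ext ?_
    rw [← Bmap_Fmap K G a b x.2, ← Bmap_Fmap K G a b y.2, h1]
  · intro g
    refine ⟨⟨Bmap K G a b (g : ↥(Eh G a b) → K),
      Bmap_mem_Smod K G a b (LinearMap.mem_ker.mp g.2)⟩, ?_⟩
    exact Subtype.ext (Fmap_Bmap K G a b (g : ↥(Eh G a b) → K))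

lemma finrank_Smod :
    (Module.finrank K ↥(Smod K G a b) : ℤ)
      = ((Eh G a b).ncard : ℤ) - ((Hverts G a b).ncard : ℤ)
        + (Nat.card ((Hgraph G a b).ConnectedComponent) : ℤ) := by
  have h1 := LinearMap.finrank_range_add_finrank_ker (Minc K G a b).mulVecLin
  have h2 := LinearMap.finrank_range_add_finrank_ker ((Minc K G a b)ᵀ).mulVecLin
  rw [Module.finrank_pi] at h1 h2
  have hrank : Module.finrank K ↥(LinearMap.range ((Minc K G a b)ᵀ).mulVecLin)
      = Module.finrank K ↥(LinearMap.range (Minc K G a b).mulVecLin) := by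
    have := Matrix.rank_transpose (Minc K G a b)
    rwa [Matrix.rank, Matrix.rank] at this
  rw [finrank_kerT, hrank] at h2
  rw [finrank_Smod_eq_ker]
  have hE : (Eh G a b).ncard = Fintype.card ↥(Eh G a b) := by
    rw [← Nat.card_coe_set_eq, Nat.card_eq_fintype_card]
  have hV : (Hverts G a b).ncard = Fintype.card ↥(Hverts G a b) := by
    rw [← Nat.card_coe_set_eq, Nat.card_eq_fintype_card]
  rw [hE, hV]
  omega

end St15

theorem statement15 (K : Type*) [Field K] {V : Type*} [Fintype V] (G : Dgraph V) (a b : V) :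
    ∃ S : Submodule K (EPath V 3 →₀ K),
      (S : Set (EPath V 3 →₀ K)) =
        {ω | ω ∈ OmegaAB K V G a b ∧ ∀ f ∈ ω.support,
            ¬ ((G.Adj a (f 2) ∨ a = f 2) ∨ (G.Adj (f 1) b ∨ f 1 = b))} ∧
      S ≤ OmegaAB K V G a b ∧
      (Module.finrank K ↥S : ℤ)
        = ((Ebetween G (setA G a b \ setB G a b) (setB G a b \ setA G a b)).ncard : ℤ)
          - ((Hverts G a b).ncard : ℤ)
          + (Nat.card ((Hgraph G a b).ConnectedComponent) : ℤ) :=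
  ⟨St15.Smod K G a b, St15.Smod_carrier K G a b, St15.Smod_le K G a b,
    St15.finrank_Smod K G a b⟩
end

section
/- Let G be a digraph and a, b vertices of G. For each edge (i,j) of G with i ∈ N⁺(a) ∩ (N⁻(b) ∪ {b}) and j ∈ (N⁺(a) ∪ {a}) ∩ N⁻(b), the elementary 3-path e_{a i j b} belongs to Ω₃^{(a,b)}(G), and the family { e_{a i j b} : (i,j) ∈ E( N⁺(a) ∩ (N⁻(b) ∪ {b}), (N⁺(a) ∪ {a}) ∩ N⁻(b) ) } is linearly independent over K. -/
open scoped BigOperators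
open Classical

theorem statement16 (K : Type*) [Field K] {V : Type*} (G : Dgraph V) (a b : V) :
    (∀ i j : V,
        (i, j) ∈ Ebetween G (Nplus G a ∩ (Nminus G b ∪ {b}))
            ((Nplus G a ∪ {a}) ∩ Nminus G b) →
        Finsupp.single ![a, i, j, b] (1 : K) ∈ OmegaAB K V G a b) ∧
    LinearIndependent K
      (fun e : ↥(Ebetween G (Nplus G a ∩ (Nminus G b ∪ {b}))
                  ((Nplus G a ∪ {a}) ∩ Nminus G b)) =>
        Finsupp.single ![a, (e : V × V).1, (e : V × V).2, b] (1 : K)) := by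
  have hc0 : ∀ x y z w : V, (![x,y,z,w]) ∘ (0 : Fin 4).succAbove = ![y,z,w] := by
    intro x y z w; funext k; fin_cases k <;> rfl
  have hc1 : ∀ x y z w : V, (![x,y,z,w]) ∘ (1 : Fin 4).succAbove = ![x,z,w] := by
    intro x y z w; funext k; fin_cases k <;> rfl
  have hc2 : ∀ x y z w : V, (![x,y,z,w]) ∘ (2 : Fin 4).succAbove = ![x,y,w] := by
    intro x y z w; funext k; fin_cases k <;> rfl
  have hc3 : ∀ x y z w : V, (![x,y,z,w]) ∘ (3 : Fin 4).succAbove = ![x,y,z] := by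
    intro x y z w; funext k; fin_cases k <;> rfl
  constructor
  · rintro i j ⟨hi, hj, hij⟩
    obtain ⟨hia, hib⟩ := hi
    obtain ⟨hja, hjb⟩ := hj
    have hallow : IsAllowedPath G ![a, i, j, b] := by
      intro k
      fin_cases k
      · exact hia
      · exact hij
      · exact hjb
    refine ⟨⟨Submodule.subset_span ⟨_, hallow, rfl⟩, ?_⟩, ?_⟩
    · show bdry K V 2 (Finsupp.single ![a,i,j,b] (1:K)) ∈ allowedMod K V G 2
      have heq : bdry K V 2 (Finsupp.single ![a,i,j,b] (1:K)) =
          ∑ q : Fin 4, ((-1:K)^(q:ℕ)) •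
            (if IsRegularPath ((![a,i,j,b]) ∘ q.succAbove)
              then Finsupp.single ((![a,i,j,b]) ∘ q.succAbove) (1:K) else 0) := by
        have hreg1 : ∀ g : EPath V 2, regProj K V 2 (Finsupp.single g (1:K)) =
            if IsRegularPath g then Finsupp.single g 1 else 0 := by
          intro g
          simp [regProj, Finsupp.linearCombination_single]
        simp only [bdry, bdryFull, LinearMap.comp_apply,
          Finsupp.linearCombination_single, one_smul, map_sum, map_smul, hreg1]
      rw [heq]
      refine Submodule.sum_mem _ (fun q _ => Submodule.smul_mem _ _ ?_)
      split
      case isTrue hreg =>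
        refine Submodule.subset_span ⟨_, ?_, rfl⟩
        fin_cases q
        · simp only [hc0, hc1, hc2, hc3] at hreg ⊢
          intro k; fin_cases k
          · exact hij
          · exact hjb
        · simp only [hc0, hc1, hc2, hc3] at hreg ⊢
          intro k; fin_cases k
          · rcases hja with h | h
            · exact h
            · exact absurd (show (![a,j,b]) (Fin.castSucc 0) = (![a,j,b]) (Fin.succ 0)
                from h.symm) (hreg 0)
          · exact hjb
        · simp only [hc0, hc1, hc2, hc3] at hreg ⊢
          intro k; fin_cases k
          · exact hia
          · rcases hib with h | h
            · exact h
            · exact absurd (show (![a,i,b]) (Fin.castSucc 1) = (![a,i,b]) (Fin.succ 1)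
                from h) (hreg 1)
        · simp only [hc0, hc1, hc2, hc3] at hreg ⊢
          intro k; fin_cases k
          · exact hia
          · exact hij
      case isFalse => exact Submodule.zero_mem _
    · intro f hf
      have : f = ![a,i,j,b] := ((Finsupp.mem_support_single ..).mp hf).1
      subst this
      exact ⟨rfl, rfl⟩
  · have hinj : Function.Injective
        (fun e : ↥(Ebetween G (Nplus G a ∩ (Nminus G b ∪ {b}))
            ((Nplus G a ∪ {a}) ∩ Nminus G b)) => ![a, (e : V × V).1, (e : V × V).2, b]) := by
      intro e e' h
      have h1 := congrFun h 1
      have h2 := congrFun h 2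
      simp only [Matrix.cons_val_one, Matrix.head_cons] at h1 h2
      exact Subtype.ext (Prod.ext h1 h2)
    have hli : LinearIndependent K (fun f : EPath V 3 => Finsupp.single f (1 : K)) := by
      have := (Finsupp.basisSingleOne (ι := EPath V 3) (R := K)).linearIndependent
      rwa [Finsupp.coe_basisSingleOne] at this
    exact hli.comp _ hinj
end

section
/- Let G be a finite digraph and a, b vertices of G. Set A := N⁺(a) \ {b}, B := N⁻(b) \ {a}, let H := Ind(A \ B, B \ A) with connected components H₁,…,H_t (as an undirected graph), and for each k let S_k be the set of edges of G that either start in V(H_k) ∩ (A \ B) and end in (N⁺(a) ∪ {a}) ∩ N⁻(b), or start in N⁺(a) ∩ (N⁻(b) ∪ {b}) and end in V(H_k) ∩ (B \ A). If |S_k| ≥ 2, then for every pair of distinct edges (u,v), (u',v') ∈ S_k there exists ω ∈ Ω₃^{(a,b)}(G) such that the coefficients of e_{a u v b} and of e_{a u' v' b} in ω are nonzero, and every other elementary 3-path e_{a x y b} occurring in ω with nonzero coefficient satisfies x ∈ V(H_k) ∩ (A \ B), y ∈ V(H_k) ∩ (B \ A), and x → y. -/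
open scoped BigOperators
open Classical

namespace St18Aux

variable (K : Type*) [Field K] {V : Type*} (G : Dgraph V) (a b : V)

lemma regProj_single {p : ℕ} (f : EPath V p) :
    regProj K V p (Finsupp.single f (1:K)) =
      if IsRegularPath f then Finsupp.single f (1:K) else 0 := by
  rw [regProj, Finsupp.linearCombination_single, one_smul]

noncomputable def mm (x : V) : EPath V 2 →₀ K :=
  regProj K V 2 (Finsupp.single ![a, x, b] (1 : K))

noncomputable def sg (x : V) : K := if x ∈ setA G a b then 1 else -1

lemma isRegular_three {x y z : V} (h1 : x ≠ y) (h2 : y ≠ z) :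
    IsRegularPath ![x, y, z] := by
  intro k
  fin_cases k
  · exact h1
  · exact h2

lemma isAllowed_three {x y z : V} (h1 : G.Adj x y) (h2 : G.Adj y z) :
    IsAllowedPath G ![x, y, z] := by
  intro k
  fin_cases k
  exacts [h1, h2]

lemma isAllowed_four {x y z w : V} (h1 : G.Adj x y) (h2 : G.Adj y z) (h3 : G.Adj z w) :
    IsAllowedPath G ![x, y, z, w] := by
  intro k
  fin_cases k
  exacts [h1, h2, h3]

lemma single_mem_allowedMod {p : ℕ} {f : EPath V p} (h : IsAllowedPath G f) (c : K) :
    Finsupp.single f c ∈ allowedMod K V G p := by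
  have h1 : Finsupp.single f (1:K) ∈ allowedMod K V G p :=
    Submodule.subset_span ⟨f, h, rfl⟩
  simpa using (allowedMod K V G p).smul_mem c h1

lemma single_mem_cluster (x y : V) (c : K) :
    Finsupp.single ![a, x, y, b] c ∈ clusterMod K V 3 a b := by
  intro f hf
  have hh := Finsupp.support_single_subset hf
  simp only [Finset.mem_singleton] at hh
  subst hh
  exact ⟨rfl, rfl⟩

end St18Aux
namespace St18Aux
section
variable (K : Type*) [Field K] {V : Type*} (G : Dgraph V) (a b : V)

lemma mm_allowed {x : V} (hax : G.Adj a x) (hxb : G.Adj x b) :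
    mm K a b x ∈ allowedMod K V G 2 := by
  have hax' : a ≠ x := by rintro rfl; exact G.loopless a hax
  have hxb' : x ≠ b := by rintro rfl; exact G.loopless x hxb
  rw [mm, regProj_single, if_pos (isRegular_three hax' hxb')]
  exact single_mem_allowedMod K G (isAllowed_three G hax hxb) 1

lemma mm_a : mm K a b a = 0 := by
  rw [mm, regProj_single, if_neg]
  intro h
  exact (h 0) rfl

lemma mm_b : mm K a b b = 0 := by
  rw [mm, regProj_single, if_neg]
  intro h
  exact (h 1) rfl

lemma bdry_single_four (x y : V) (hax : a ≠ x) (hxy : x ≠ y) (hyb : y ≠ b) :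
    bdry K V 2 (Finsupp.single ![a, x, y, b] (1:K)) =
      Finsupp.single ![x, y, b] (1:K) - mm K a b y + mm K a b x
        - Finsupp.single ![a, x, y] (1:K) := by
  have h0 : (![a,x,y,b] : EPath V 3) ∘ (0 : Fin 4).succAbove = ![x,y,b] := by
    funext i; fin_cases i <;> rfl
  have h1 : (![a,x,y,b] : EPath V 3) ∘ (1 : Fin 4).succAbove = ![a,y,b] := by
    funext i; fin_cases i <;> rfl
  have h2 : (![a,x,y,b] : EPath V 3) ∘ (2 : Fin 4).succAbove = ![a,x,b] := by
    funext i; fin_cases i <;> rfl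
  have h3 : (![a,x,y,b] : EPath V 3) ∘ (3 : Fin 4).succAbove = ![a,x,y] := by
    funext i; fin_cases i <;> rfl
  have hb : bdryFull K V 2 (Finsupp.single ![a,x,y,b] (1:K))
      = ∑ q : Fin 4, ((-1:K)^(q:ℕ)) • Finsupp.single ((![a,x,y,b] : EPath V 3) ∘ q.succAbove) (1:K) := by
    rw [bdryFull, Finsupp.linearCombination_single, one_smul]
  rw [bdry, LinearMap.comp_apply, hb, map_sum, Fin.sum_univ_four]
  simp only [map_smul, h0, h1, h2, h3]
  rw [regProj_single K (![x,y,b] : EPath V 2), if_pos (isRegular_three hxy hyb),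
    regProj_single K (![a,x,y] : EPath V 2), if_pos (isRegular_three hax hxy)]
  rw [mm, mm]
  have e3 : ((3:Fin 4):ℕ) = 3 := rfl
  rw [e3]
  norm_num [Finsupp.single_neg]
  abel

end
end St18Aux
namespace St18Aux
section
variable (K : Type*) [Field K] {V : Type*} (G : Dgraph V) (a b : V)

lemma mem_compVerts {v : V} (hv : v ∈ Hverts G a b)
    {c : (Hgraph G a b).ConnectedComponent}
    (hc : (Hgraph G a b).connectedComponentMk ⟨v, hv⟩ = c) :
    v ∈ compVerts G a b c := ⟨hv, hc⟩

lemma walk_aux (c : (Hgraph G a b).ConnectedComponent)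
    {z z' : Hverts G a b} (p : (Hgraph G a b).Walk z z')
    (hz' : (Hgraph G a b).connectedComponentMk z' = c) :
    ∀ s : K, s ≠ 0 → ∃ (η : EPath V 3 →₀ K) (t : K), t ≠ 0 ∧
      (∀ f ∈ η.support, ∃ x y : V, f = ![a, x, y, b] ∧
        x ∈ compVerts G a b c ∩ (setA G a b \ setB G a b) ∧
        y ∈ compVerts G a b c ∩ (setB G a b \ setA G a b) ∧ G.Adj x y) ∧
      η ∈ allowedMod K V G 3 ∧
      η ∈ clusterMod K V 3 a b ∧
      (bdry K V 2 η - (s * sg K G a b (z : V)) • mm K a b (z : V)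
        - (t * sg K G a b (z' : V)) • mm K a b (z' : V)) ∈ allowedMod K V G 2 := by
  induction p with
  | nil =>
      intro s hs
      refine ⟨0, -s, neg_ne_zero.2 hs, by simp, zero_mem _, zero_mem _, ?_⟩
      have h : ∀ v : V, (bdry K V 2 (0 : EPath V 3 →₀ K)
          - (s * sg K G a b v) • mm K a b v
          - ((-s) * sg K G a b v) • mm K a b v) = 0 := by
        intro v; rw [map_zero]; module
      rw [h]; exact zero_mem _
  | @cons z z₁ z₂ h q ih =>
      intro s hs
      have hz₁c : (Hgraph G a b).connectedComponentMk z₁ = c :=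
        (SimpleGraph.ConnectedComponent.sound q.reachable).trans hz'
      have hzc : (Hgraph G a b).connectedComponentMk z = c :=
        (SimpleGraph.ConnectedComponent.sound h.reachable).trans hz₁c
      obtain ⟨η₁, t, ht, hsupp₁, hall₁, hclu₁, hbd₁⟩ := ih hz' (-s) (neg_ne_zero.2 hs)
      rcases h with ⟨hx, hy, hadj⟩ | ⟨hx, hy, hadj⟩
      · -- z is on the A side, z₁ on the B side, edge (z, z₁)
        refine ⟨s • Finsupp.single ![a, (z : V), (z₁ : V), b] (1:K) + η₁, t, ht, ?_, ?_, ?_, ?_⟩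
        · intro f hf
          rcases Finset.mem_union.mp (Finsupp.support_add hf) with hf' | hf'
          · have hf'' := Finsupp.support_single_subset (Finsupp.support_smul hf')
            simp only [Finset.mem_singleton] at hf''
            exact ⟨z, z₁, hf'', ⟨mem_compVerts G a b z.2 hzc, hx⟩,
              ⟨mem_compVerts G a b z₁.2 hz₁c, hy⟩, hadj⟩
          · exact hsupp₁ f hf'
        · exact add_mem ((allowedMod K V G 3).smul_mem s
            (single_mem_allowedMod K G (isAllowed_four G hx.1.1 hadj hy.1.1) 1)) hall₁
        · exact add_mem ((clusterMod K V 3 a b).smul_mem s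
            (single_mem_cluster K a b (z : V) (z₁ : V) 1)) hclu₁
        · have hadjaz : G.Adj a (z : V) := hx.1.1
          have hadjb : G.Adj (z₁ : V) b := hy.1.1
          have haz : a ≠ (z : V) := fun h' => G.loopless _ ((congrArg (fun w => G.Adj w (z : V)) h').mp hadjaz)
          have hzz : (z : V) ≠ (z₁ : V) := by intro h'; rw [h'] at hadj; exact G.loopless _ hadj
          have hzb : (z₁ : V) ≠ b := by intro h'; rw [h'] at hadjb; exact G.loopless _ hadjb
          have hsz : sg K G a b (z : V) = 1 := if_pos hx.1
          have hsz₁ : sg K G a b (z₁ : V) = -1 := if_neg hy.2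
          have key : bdry K V 2 (s • Finsupp.single ![a, (z : V), (z₁ : V), b] (1:K) + η₁)
              - (s * sg K G a b (z : V)) • mm K a b (z : V)
              - (t * sg K G a b (z₂ : V)) • mm K a b (z₂ : V)
            = s • Finsupp.single ![(z : V), (z₁ : V), b] (1:K)
              - s • Finsupp.single ![a, (z : V), (z₁ : V)] (1:K)
              + (bdry K V 2 η₁ - ((-s) * sg K G a b (z₁ : V)) • mm K a b (z₁ : V)
                - (t * sg K G a b (z₂ : V)) • mm K a b (z₂ : V)) := by
            rw [map_add, map_smul, bdry_single_four K a b _ _ haz hzz hzb, hsz, hsz₁]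
            module
          rw [key]
          exact add_mem (sub_mem ((allowedMod K V G 2).smul_mem s
              (single_mem_allowedMod K G (isAllowed_three G hadj hy.1.1) 1))
            ((allowedMod K V G 2).smul_mem s
              (single_mem_allowedMod K G (isAllowed_three G hx.1.1 hadj) 1))) hbd₁
      · -- z₁ is on the A side, z on the B side, edge (z₁, z)
        refine ⟨s • Finsupp.single ![a, (z₁ : V), (z : V), b] (1:K) + η₁, t, ht, ?_, ?_, ?_, ?_⟩
        · intro f hf
          rcases Finset.mem_union.mp (Finsupp.support_add hf) with hf' | hf'
          · have hf'' := Finsupp.support_single_subset (Finsupp.support_smul hf')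
            simp only [Finset.mem_singleton] at hf''
            exact ⟨z₁, z, hf'', ⟨mem_compVerts G a b z₁.2 hz₁c, hx⟩,
              ⟨mem_compVerts G a b z.2 hzc, hy⟩, hadj⟩
          · exact hsupp₁ f hf'
        · exact add_mem ((allowedMod K V G 3).smul_mem s
            (single_mem_allowedMod K G (isAllowed_four G hx.1.1 hadj hy.1.1) 1)) hall₁
        · exact add_mem ((clusterMod K V 3 a b).smul_mem s
            (single_mem_cluster K a b (z₁ : V) (z : V) 1)) hclu₁
        · have hadjaz : G.Adj a (z₁ : V) := hx.1.1
          have hadjb : G.Adj (z : V) b := hy.1.1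
          have haz : a ≠ (z₁ : V) := fun h' => G.loopless _ ((congrArg (fun w => G.Adj w (z₁ : V)) h').mp hadjaz)
          have hzz : (z₁ : V) ≠ (z : V) := by intro h'; rw [h'] at hadj; exact G.loopless _ hadj
          have hzb : (z : V) ≠ b := by intro h'; rw [h'] at hadjb; exact G.loopless _ hadjb
          have hsz : sg K G a b (z : V) = -1 := if_neg hy.2
          have hsz₁ : sg K G a b (z₁ : V) = 1 := if_pos hx.1
          have key : bdry K V 2 (s • Finsupp.single ![a, (z₁ : V), (z : V), b] (1:K) + η₁)
              - (s * sg K G a b (z : V)) • mm K a b (z : V)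
              - (t * sg K G a b (z₂ : V)) • mm K a b (z₂ : V)
            = s • Finsupp.single ![(z₁ : V), (z : V), b] (1:K)
              - s • Finsupp.single ![a, (z₁ : V), (z : V)] (1:K)
              + (bdry K V 2 η₁ - ((-s) * sg K G a b (z₁ : V)) • mm K a b (z₁ : V)
                - (t * sg K G a b (z₂ : V)) • mm K a b (z₂ : V)) := by
            rw [map_add, map_smul, bdry_single_four K a b _ _ haz hzz hzb, hsz, hsz₁]
            module
          rw [key]
          exact add_mem (sub_mem ((allowedMod K V G 2).smul_mem s
              (single_mem_allowedMod K G (isAllowed_three G hadj hy.1.1) 1))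
            ((allowedMod K V G 2).smul_mem s
              (single_mem_allowedMod K G (isAllowed_three G hx.1.1 hadj) 1))) hbd₁

end
end St18Aux
namespace St18Aux
section
variable (K : Type*) [Field K] {V : Type*} (G : Dgraph V) (a b : V)

lemma Sset_props (c : (Hgraph G a b).ConnectedComponent) {e : V × V}
    (he : e ∈ Sset G a b c) :
    G.Adj a e.1 ∧ G.Adj e.1 e.2 ∧ G.Adj e.2 b ∧
    ¬(e.1 ∈ setA G a b \ setB G a b ∧ e.2 ∈ setB G a b \ setA G a b) ∧
    ∃ w : Hverts G a b, (Hgraph G a b).connectedComponentMk w = c ∧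
      (bdry K V 2 (Finsupp.single ![a, e.1, e.2, b] (1:K))
        - sg K G a b (w : V) • mm K a b (w : V)) ∈ allowedMod K V G 2 := by
  rcases he with ⟨h1, h2, h3⟩ | ⟨h1, h2, h3⟩
  · -- type 1: e.1 ∈ comp ∩ (A \ B), e.2 ∈ (N⁺(a) ∪ {a}) ∩ N⁻(b)
    have hA : e.1 ∈ setA G a b \ setB G a b := h1.2
    have hae : G.Adj a e.1 := hA.1.1
    have heb : G.Adj e.2 b := h2.2
    have hne1 : a ≠ e.1 := fun h => G.loopless _ ((congrArg (fun w => G.Adj w e.1) h).mp hae)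
    have hne2 : e.1 ≠ e.2 := by intro h; rw [h] at h3; exact G.loopless _ h3
    have hne3 : e.2 ≠ b := by intro h; rw [h] at heb; exact G.loopless _ heb
    obtain ⟨hv, hcc⟩ := h1.1
    refine ⟨hae, h3, heb, ?_, ⟨e.1, hv⟩, hcc, ?_⟩
    · rintro ⟨-, hB⟩
      rcases h2.1 with hp | hp
      · exact hB.2 ⟨hp, hne3⟩
      · exact hB.1.2 hp
    · have hsg : sg K G a b e.1 = 1 := if_pos hA.1
      have hmm : mm K a b e.2 ∈ allowedMod K V G 2 := by
        rcases h2.1 with hp | hp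
        · exact mm_allowed K G a b hp h2.2
        · rw [show e.2 = a from hp, mm_a]; exact zero_mem _
      have key : bdry K V 2 (Finsupp.single ![a, e.1, e.2, b] (1:K))
          - sg K G a b e.1 • mm K a b e.1
          = Finsupp.single ![e.1, e.2, b] (1:K) - mm K a b e.2
            - Finsupp.single ![a, e.1, e.2] (1:K) := by
        rw [bdry_single_four K a b _ _ hne1 hne2 hne3, hsg]
        module
      rw [key]
      exact sub_mem (sub_mem (single_mem_allowedMod K G (isAllowed_three G h3 heb) 1) hmm)
        (single_mem_allowedMod K G (isAllowed_three G hae h3) 1)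
  · -- type 2: e.1 ∈ N⁺(a) ∩ (N⁻(b) ∪ {b}), e.2 ∈ comp ∩ (B \ A)
    have hB : e.2 ∈ setB G a b \ setA G a b := h2.2
    have hae : G.Adj a e.1 := h1.1
    have heb : G.Adj e.2 b := hB.1.1
    have hne1 : a ≠ e.1 := fun h => G.loopless _ ((congrArg (fun w => G.Adj w e.1) h).mp hae)
    have hne2 : e.1 ≠ e.2 := by intro h; rw [h] at h3; exact G.loopless _ h3
    have hne3 : e.2 ≠ b := by intro h; rw [h] at heb; exact G.loopless _ heb
    obtain ⟨hv, hcc⟩ := h2.1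
    refine ⟨hae, h3, heb, ?_, ⟨e.2, hv⟩, hcc, ?_⟩
    · rintro ⟨hA, -⟩
      rcases h1.2 with hp | hp
      · exact hA.2 ⟨hp, hne1.symm⟩
      · exact hA.1.2 hp
    · have hsg : sg K G a b e.2 = -1 := if_neg hB.2
      have hmm : mm K a b e.1 ∈ allowedMod K V G 2 := by
        rcases h1.2 with hp | hp
        · exact mm_allowed K G a b h1.1 hp
        · rw [show e.1 = b from hp, mm_b]; exact zero_mem _
      have key : bdry K V 2 (Finsupp.single ![a, e.1, e.2, b] (1:K))
          - sg K G a b e.2 • mm K a b e.2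
          = Finsupp.single ![e.1, e.2, b] (1:K) + mm K a b e.1
            - Finsupp.single ![a, e.1, e.2] (1:K) := by
        rw [bdry_single_four K a b _ _ hne1 hne2 hne3, hsg]
        module
      rw [key]
      exact sub_mem (add_mem (single_mem_allowedMod K G (isAllowed_three G h3 heb) 1) hmm)
        (single_mem_allowedMod K G (isAllowed_three G hae h3) 1)

lemma path_inj {x y x' y' : V} (h : (![a,x,y,b] : EPath V 3) = ![a,x',y',b]) :
    x = x' ∧ y = y' :=
  ⟨by simpa using congrFun h 1, by simpa using congrFun h 2⟩

end
end St18Aux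
theorem statement18 (K : Type*) [Field K] {V : Type*} [Fintype V] (G : Dgraph V) (a b : V)
    (c : (Hgraph G a b).ConnectedComponent)
    (hS : 2 ≤ (Sset G a b c).ncard)
    (e e' : V × V) (he : e ∈ Sset G a b c) (he' : e' ∈ Sset G a b c) (hne : e ≠ e') :
    ∃ ω ∈ OmegaAB K V G a b,
      ω ![a, e.1, e.2, b] ≠ 0 ∧ ω ![a, e'.1, e'.2, b] ≠ 0 ∧
      ∀ f ∈ ω.support, f ≠ ![a, e.1, e.2, b] → f ≠ ![a, e'.1, e'.2, b] →
        f 1 ∈ compVerts G a b c ∩ (setA G a b \ setB G a b) ∧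
        f 2 ∈ compVerts G a b c ∩ (setB G a b \ setA G a b) ∧
        G.Adj (f 1) (f 2) := by
  classical
  open St18Aux in
  obtain ⟨hae, hee, heb, hnH, w, hwc, hbde⟩ := Sset_props K G a b c he
  obtain ⟨hae', hee', heb', hnH', w', hwc', hbde'⟩ := Sset_props K G a b c he'
  obtain ⟨p⟩ : (Hgraph G a b).Reachable w w' :=
    SimpleGraph.ConnectedComponent.exact (hwc.trans hwc'.symm)
  obtain ⟨η, t, ht, hsupp, hallη, hcluη, hbdη⟩ :=
    walk_aux K G a b c p hwc' (-1 : K) (by norm_num)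
  set Pe : EPath V 3 := ![a, e.1, e.2, b] with hPe
  set Pe' : EPath V 3 := ![a, e'.1, e'.2, b] with hPe'
  have hPePe' : Pe ≠ Pe' := by
    intro h
    obtain ⟨h1, h2⟩ := path_inj a b h
    exact hne (Prod.ext h1 h2)
  have hηPe : η Pe = 0 := by
    by_contra hc
    obtain ⟨x, y, hf, hx, hy, -⟩ := hsupp Pe (Finsupp.mem_support_iff.2 hc)
    obtain ⟨h1, h2⟩ := path_inj a b hf
    exact hnH ⟨h1 ▸ hx.2, h2 ▸ hy.2⟩
  have hηPe' : η Pe' = 0 := by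
    by_contra hc
    obtain ⟨x, y, hf, hx, hy, -⟩ := hsupp Pe' (Finsupp.mem_support_iff.2 hc)
    obtain ⟨h1, h2⟩ := path_inj a b hf
    exact hnH' ⟨h1 ▸ hx.2, h2 ▸ hy.2⟩
  set ω : EPath V 3 →₀ K := Finsupp.single Pe (1:K) + η + (-t) • Finsupp.single Pe' (1:K)
    with hω
  have hamem : ω ∈ allowedMod K V G 3 :=
    add_mem (add_mem (single_mem_allowedMod K G (isAllowed_four G hae hee heb) 1) hallη)
      ((allowedMod K V G 3).smul_mem _
        (single_mem_allowedMod K G (isAllowed_four G hae' hee' heb') 1))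
  have hbmem : bdry K V 2 ω ∈ allowedMod K V G 2 := by
    have key : bdry K V 2 ω
        = (bdry K V 2 (Finsupp.single Pe (1:K)) - sg K G a b (w : V) • mm K a b (w : V))
          + (bdry K V 2 η - ((-1 : K) * sg K G a b (w : V)) • mm K a b (w : V)
              - (t * sg K G a b (w' : V)) • mm K a b (w' : V))
          + (-t) • (bdry K V 2 (Finsupp.single Pe' (1:K))
              - sg K G a b (w' : V) • mm K a b (w' : V)) := by
      rw [hω]
      simp only [map_add, map_smul]
      module
    rw [key]
    exact add_mem (add_mem hbde hbdη) ((allowedMod K V G 2).smul_mem _ hbde')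
  have homega : ω ∈ Omega K V G 3 := by
    have hOmega : Omega K V G 3
        = allowedMod K V G 3 ⊓ (allowedMod K V G 2).comap (bdry K V 2) := rfl
    rw [hOmega]
    exact Submodule.mem_inf.mpr ⟨hamem, Submodule.mem_comap.mpr hbmem⟩
  have hcmem : ω ∈ clusterMod K V 3 a b :=
    add_mem (add_mem (single_mem_cluster K a b e.1 e.2 1) hcluη)
      ((clusterMod K V 3 a b).smul_mem _ (single_mem_cluster K a b e'.1 e'.2 1))
  have hOAB : ω ∈ OmegaAB K V G a b := by
    have h : OmegaAB K V G a b = Omega K V G 3 ⊓ clusterMod K V 3 a b := rfl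
    rw [h]
    exact Submodule.mem_inf.mpr ⟨homega, hcmem⟩
  refine ⟨ω, hOAB, ?_, ?_, ?_⟩
  · have h1 : ω Pe = 1 := by
      rw [hω, Finsupp.add_apply, Finsupp.add_apply, Finsupp.smul_apply, hηPe,
        Finsupp.single_eq_same, Finsupp.single_eq_of_ne' (Ne.symm hPePe')]
      simp
    rw [h1]; exact one_ne_zero
  · have h2 : ω Pe' = -t := by
      rw [hω, Finsupp.add_apply, Finsupp.add_apply, Finsupp.smul_apply, hηPe',
        Finsupp.single_eq_same, Finsupp.single_eq_of_ne' hPePe']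
      simp
    rw [h2]; exact neg_ne_zero.2 ht
  · intro f hf hf1 hf2
    rw [hω] at hf
    have hf' : f ∈ (Finsupp.single Pe (1:K) + η).support
        ∪ ((-t) • Finsupp.single Pe' (1:K)).support := Finsupp.support_add hf
    rcases Finset.mem_union.mp hf' with hf'' | hf''
    · rcases Finset.mem_union.mp (Finsupp.support_add hf'') with hf3 | hf3
      · have h4 := Finsupp.support_single_subset hf3
        simp only [Finset.mem_singleton] at h4
        exact absurd h4 hf1
      · obtain ⟨x, y, hfe, hx, hy, hadj⟩ := hsupp f hf3
        subst hfe
        refine ⟨?_, ?_, ?_⟩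
        · simpa using hx
        · simpa using hy
        · simpa using hadj
    · have h4 := Finsupp.support_single_subset (Finsupp.support_smul hf'')
      simp only [Finset.mem_singleton] at h4
      exact absurd h4 hf2
end
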